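/- (Linear convergence to a neighborhood under PL.) In the setting of the nonconvex stationarity bound — f : ℝ^d → ℝ differentiable with L-Lipschitz gradient and bounded below by f⋆; constants 0 < μ_H ≤ M_H, 0 ≤ ρ < 1, σ ≥ 0; step size 0 < η ≤ μ_H(1−ρ)/(L(M_H+ρμ_H)²); θ_{t+1} = θ_t − η û_t with θ_t F_t-measurable, û_t F_{t+1}-measurable square-integrable, and almost surely ‖E[û_t|F_t] − H_t∇f(θ_t)‖ ≤ ρμ_H‖∇f(θ_t)‖ for some F_t-measurable symmetric H_t with μ_H I ⪯ H_t ⪯ M_H I, and E[‖û_t − E[û_t|F_t]‖² | F_t] ≤ σ² — assume additionally that f satisfies the Polyak–Łojasiewicz condition with constant μ_PL > 0: (1/2)‖∇f(θ)‖² ≥ μ_PL (f(θ) − f⋆) for all θ. Define c = η μ_H (1−ρ) − (L η² / 2)(M_H + ρ μ_H)², and assume 0 < 2 μ_PL c < 1. Then for every T ≥ 0, E[f(θ_T) − f⋆] ≤ (1 − 2 μ_PL c)^T (f(θ_0) − f⋆) + L η² σ² / (4 μ_PL c). -/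

import Mathlib

open MeasureTheory ProbabilityTheory
open scoped RealInnerProductSpace

section Helpers

lemma smooth_descent {E : Type*} [NormedAddCommGroup E] [InnerProductSpace ℝ E]
    [CompleteSpace E] {f : E → ℝ} {L : ℝ} (hL : 0 ≤ L) (hdiff : Differentiable ℝ f)
    (hlip : ∀ x y, ‖gradient f x - gradient f y‖ ≤ L * ‖x - y‖) (x y : E) :
    f y ≤ f x + ⟪gradient f x, y - x⟫ + L / 2 * ‖y - x‖ ^ 2 := by
  set v := y - x with hv
  have hgc : Continuous (gradient f) := by
    have : LipschitzWith L.toNNReal (gradient f) :=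
      LipschitzWith.of_dist_le_mul (fun a b => by
        simpa [dist_eq_norm, Real.coe_toNNReal L hL] using hlip a b)
    exact this.continuous
  have hpathc : Continuous (fun t : ℝ => x + t • v) :=
    continuous_const.add (continuous_id.smul continuous_const)
  have hφ : ∀ t : ℝ, HasDerivAt (fun s : ℝ => f (x + s • v))
      ⟪gradient f (x + t • v), v⟫ t := by
    intro t
    have h1 : HasDerivAt (fun s : ℝ => x + s • v) v t := by
      simpa using ((hasDerivAt_id t).smul_const v).const_add x
    have h2 := ((hdiff (x + t • v)).hasGradientAt).hasFDerivAt
    have := h2.comp_hasDerivAt t h1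
    simpa [InnerProductSpace.toDual_apply_apply, Function.comp_def] using this
  have ψcont : Continuous fun t : ℝ => ⟪gradient f (x + t • v), v⟫ :=
    (hgc.comp hpathc).inner continuous_const
  have ψ2cont : Continuous fun t : ℝ => ⟪gradient f x, v⟫ + L * ‖v‖ ^ 2 * t :=
    continuous_const.add (continuous_const.mul continuous_id)
  have hftc : f (x + (1:ℝ) • v) - f (x + (0:ℝ) • v)
      = ∫ t in (0:ℝ)..1, ⟪gradient f (x + t • v), v⟫ := by
    rw [intervalIntegral.integral_eq_sub_of_hasDerivAt (fun t _ => hφ t)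
      (ψcont.intervalIntegrable 0 1)]
  have hmono : ∫ t in (0:ℝ)..1, ⟪gradient f (x + t • v), v⟫
      ≤ ∫ t in (0:ℝ)..1, (⟪gradient f x, v⟫ + L * ‖v‖ ^ 2 * t) := by
    apply intervalIntegral.integral_mono_on (by norm_num)
      (ψcont.intervalIntegrable 0 1) (ψ2cont.intervalIntegrable 0 1)
    intro t ht
    have h1 : ⟪gradient f (x + t • v) - gradient f x, v⟫ ≤ L * t * ‖v‖ ^ 2 := by
      calc ⟪gradient f (x + t • v) - gradient f x, v⟫
          ≤ ‖gradient f (x + t • v) - gradient f x‖ * ‖v‖ := real_inner_le_norm _ _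
        _ ≤ (L * ‖(x + t • v) - x‖) * ‖v‖ := by
            gcongr
            exact hlip _ _
        _ = L * t * ‖v‖ ^ 2 := by
            have hn : ‖(x + t • v) - x‖ = t * ‖v‖ := by
              simp [norm_smul, abs_of_nonneg ht.1]
            rw [hn]; ring
    have h2 : ⟪gradient f (x + t • v), v⟫
        = ⟪gradient f x, v⟫ + ⟪gradient f (x + t • v) - gradient f x, v⟫ := by
      rw [inner_sub_left]; ring
    rw [h2]; nlinarith
  have hval : ∫ t in (0:ℝ)..1, (⟪gradient f x, v⟫ + L * ‖v‖ ^ 2 * t)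
      = ⟪gradient f x, v⟫ + L / 2 * ‖v‖ ^ 2 := by
    rw [intervalIntegral.integral_add intervalIntegrable_const
      ((by continuity : Continuous fun t : ℝ => L * ‖v‖ ^ 2 * t).intervalIntegrable 0 1),
      intervalIntegral.integral_const_mul, integral_id]
    simp
    ring
  have h0 : x + (0:ℝ) • v = x := by simp
  have h1 : x + (1:ℝ) • v = y := by simp [hv]
  rw [h0, h1] at hftc
  linarith [hftc, hmono.trans_eq hval]

lemma op_norm_bound {E : Type*} [NormedAddCommGroup E] [InnerProductSpace ℝ E]
    (A : E →ₗ[ℝ] E) (hsym : ∀ p q : E, ⟪A p, q⟫ = ⟪p, A q⟫) {M : ℝ} (hM : 0 ≤ M)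
    (hpos : ∀ p : E, 0 ≤ ⟪p, A p⟫) (hub : ∀ p : E, ⟪p, A p⟫ ≤ M * ‖p‖ ^ 2) (x : E) :
    ‖A x‖ ≤ M * ‖x‖ := by
  have cs : ∀ p q : E, ⟪p, A q⟫ ^ 2 ≤ ⟪p, A p⟫ * ⟪q, A q⟫ := by
    intro p q
    have key : ∀ t : ℝ, 0 ≤ ⟪q, A q⟫ * (t * t) + (2 * ⟪p, A q⟫) * t + ⟪p, A p⟫ := by
      intro t
      have h0 := hpos (p + t • q)
      have expand : ⟪p + t • q, A (p + t • q)⟫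
          = ⟪p, A p⟫ + 2 * t * ⟪p, A q⟫ + t ^ 2 * ⟪q, A q⟫ := by
        have hqp : ⟪q, A p⟫ = ⟪p, A q⟫ := by
          rw [← hsym q p, real_inner_comm]
        simp only [map_add, LinearMap.map_smul, inner_add_left, inner_add_right,
          real_inner_smul_left, real_inner_smul_right, hqp]
        ring
      rw [expand] at h0; nlinarith
    have h := discrim_le_zero key
    rw [discrim] at h; nlinarith
  rcases eq_or_ne (A x) 0 with h | h
  · rw [h, norm_zero]; positivity
  · have h1 := cs (A x) x
    have e1 : ⟪A x, A x⟫ = ‖A x‖ ^ 2 := real_inner_self_eq_norm_sq _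
    have h2 := hub (A x)
    have h3 := hub x
    have h4 := hpos x
    have h5 : 0 < ‖A x‖ := norm_pos_iff.mpr h
    have h6 := hpos (A x)
    have hprod : ⟪A x, A (A x)⟫ * ⟪x, A x⟫ ≤ (M * ‖A x‖ ^ 2) * (M * ‖x‖ ^ 2) :=
      mul_le_mul h2 h3 h4 (by positivity)
    have h8 : ‖A x‖ ^ 2 ≤ M ^ 2 * ‖x‖ ^ 2 := by nlinarith [mul_pos h5 h5]
    nlinarith [mul_nonneg hM (norm_nonneg x)]

lemma memLp_inner_integrable {Ω : Type*} {m0 : MeasurableSpace Ω} {μ : Measure Ω}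
    {E : Type*} [NormedAddCommGroup E] [InnerProductSpace ℝ E]
    {f g : Ω → E} (hf : MemLp f 2 μ) (hg : MemLp g 2 μ) :
    Integrable (fun ω => ⟪f ω, g ω⟫) μ := by
  have h := L2.integrable_inner (𝕜 := ℝ) (hf.toLp f) (hg.toLp g)
  apply h.congr
  filter_upwards [hf.coeFn_toLp, hg.coeFn_toLp] with ω h1 h2
  rw [h1, h2]

lemma condexp_clm {Ω : Type*} {m m0 : MeasurableSpace Ω} (hm : m ≤ m0)
    {μ : Measure Ω} [IsFiniteMeasure μ]
    {E F' : Type*} [NormedAddCommGroup E] [NormedSpace ℝ E] [CompleteSpace E]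
    [NormedAddCommGroup F'] [NormedSpace ℝ F'] [CompleteSpace F']
    (T : E →L[ℝ] F') {u : Ω → E} (hu : Integrable u μ) :
    (fun ω => T ((μ[u|m]) ω)) =ᵐ[μ] μ[fun ω => T (u ω)|m] := by
  haveI : SigmaFinite (μ.trim hm) := sigmaFiniteTrim_mono _ le_rfl
  have hTu : Integrable (fun ω => T (u ω)) μ := T.integrable_comp hu
  refine ae_eq_condExp_of_forall_setIntegral_eq hm hTu ?_ ?_ ?_
  · intro s _ _
    exact (T.integrable_comp integrable_condExp).integrableOn
  · intro s hs _
    rw [T.integral_comp_comm integrable_condExp.integrableOn,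
      T.integral_comp_comm hu.integrableOn, setIntegral_condExp hm hu hs]
  · exact StronglyMeasurable.aestronglyMeasurable
      (T.continuous.comp_stronglyMeasurable stronglyMeasurable_condExp)

lemma integral_inner_condexp {Ω : Type*} {m m0 : MeasurableSpace Ω} (hm : m ≤ m0)
    {μ : Measure Ω} [IsProbabilityMeasure μ] {d : ℕ}
    {g u : Ω → EuclideanSpace ℝ (Fin d)}
    (hgm : StronglyMeasurable[m] g) (hg : MemLp g 2 μ) (hu : MemLp u 2 μ)
    (hcu : MemLp (μ[u|m]) 2 μ) :
    ∫ ω, ⟪g ω, u ω⟫ ∂μ = ∫ ω, ⟪g ω, (μ[u|m]) ω⟫ ∂μ := by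
  haveI : SigmaFinite (μ.trim hm) := sigmaFiniteTrim_mono _ le_rfl
  have hinner : ∀ (x y : EuclideanSpace ℝ (Fin d)), ⟪x, y⟫ = ∑ i, x i * y i := by
    intro x y
    simp [PiLp.inner_apply, RCLike.inner_apply, mul_comm]
  have hgc : ∀ i, MemLp (fun ω => g ω i) 2 μ := fun i =>
    (EuclideanSpace.proj (𝕜 := ℝ) i).comp_memLp' hg
  have huc : ∀ i, MemLp (fun ω => u ω i) 2 μ := fun i =>
    (EuclideanSpace.proj (𝕜 := ℝ) i).comp_memLp' hu
  have hcuc : ∀ i, MemLp (fun ω => (μ[u|m]) ω i) 2 μ := fun i =>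
    (EuclideanSpace.proj (𝕜 := ℝ) i).comp_memLp' hcu
  have hmul : ∀ i : Fin d, Integrable (fun ω => g ω i * u ω i) μ := fun i => by
    simpa [RCLike.inner_apply, mul_comm] using memLp_inner_integrable (hgc i) (huc i)
  have hmul2 : ∀ i : Fin d, Integrable (fun ω => g ω i * (μ[u|m]) ω i) μ := fun i => by
    simpa [RCLike.inner_apply, mul_comm] using memLp_inner_integrable (hgc i) (hcuc i)
  have hproj : ∀ i : Fin d, (fun ω => (μ[u|m]) ω i) =ᵐ[μ] μ[fun ω => u ω i|m] := fun i => by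
    simpa using condexp_clm hm (EuclideanSpace.proj (𝕜 := ℝ) i) (hu.integrable one_le_two)
  calc ∫ ω, ⟪g ω, u ω⟫ ∂μ = ∫ ω, ∑ i, g ω i * u ω i ∂μ := by
        simp_rw [hinner]
    _ = ∑ i, ∫ ω, g ω i * u ω i ∂μ := integral_finset_sum _ (fun i _ => hmul i)
    _ = ∑ i, ∫ ω, g ω i * (μ[u|m]) ω i ∂μ := by
        refine Finset.sum_congr rfl (fun i _ => ?_)
        have e1 : ∫ ω, g ω i * u ω i ∂μ = ∫ ω, (μ[fun ω => g ω i * u ω i|m]) ω ∂μ :=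
          (integral_condExp hm).symm
        have e2 : (μ[fun ω => g ω i * u ω i|m]) =ᵐ[μ]
            fun ω => g ω i * (μ[fun ω => u ω i|m]) ω := by
          have hgim : StronglyMeasurable[m] (fun ω => g ω i) :=
            (EuclideanSpace.proj (𝕜 := ℝ) i).continuous.comp_stronglyMeasurable hgm
          exact condExp_mul_of_stronglyMeasurable_left hgim (hmul i)
            ((huc i).integrable one_le_two)
        rw [e1, integral_congr_ae e2]
        refine integral_congr_ae ?_
        filter_upwards [hproj i] with ω hω
        rw [← hω]
    _ = ∫ ω, ∑ i, g ω i * (μ[u|m]) ω i ∂μ :=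
        (integral_finset_sum _ (fun i _ => hmul2 i)).symm
    _ = ∫ ω, ⟪g ω, (μ[u|m]) ω⟫ ∂μ := by simp_rw [hinner]

lemma memLp_sq_integrable {Ω : Type*} {m0 : MeasurableSpace Ω} {μ : Measure Ω}
    {E : Type*} [NormedAddCommGroup E] [InnerProductSpace ℝ E]
    {f : Ω → E} (hf : MemLp f 2 μ) :
    Integrable (fun ω => ‖f ω‖ ^ 2) μ := by
  have := memLp_inner_integrable hf hf
  apply this.congr
  filter_upwards with ω
  rw [real_inner_self_eq_norm_sq]


lemma bias_consequences {E : Type*} [NormedAddCommGroup E] [InnerProductSpace ℝ E]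
    {muH MH ρ : ℝ} (hmuH : 0 < muH) (hMH0 : 0 ≤ MH) (hρ0 : 0 ≤ ρ)
    (A : E →ₗ[ℝ] E) (hsym : ∀ p q : E, ⟪A p, q⟫ = ⟪p, A q⟫)
    (hbounds : ∀ p : E, muH * ‖p‖ ^ 2 ≤ ⟪p, A p⟫ ∧ ⟪p, A p⟫ ≤ MH * ‖p‖ ^ 2)
    (gw w : E) (hb : ‖w - A gw‖ ≤ ρ * muH * ‖gw‖) :
    (1 - ρ) * muH * ‖gw‖ ^ 2 ≤ ⟪gw, w⟫ ∧ ‖w‖ ≤ (MH + ρ * muH) * ‖gw‖ := by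
  have hAub : ‖A gw‖ ≤ MH * ‖gw‖ :=
    op_norm_bound A hsym hMH0
      (fun p => le_trans (by positivity) ((hbounds p).1))
      (fun p => (hbounds p).2) gw
  constructor
  · have h1 : ⟪gw, w⟫ = ⟪gw, A gw⟫ + ⟪gw, w - A gw⟫ := by
      rw [inner_sub_right]; ring
    have h2 := (hbounds gw).1
    have h3 := abs_le.mp (abs_real_inner_le_norm gw (w - A gw))
    have h5 : ‖gw‖ * ‖w - A gw‖ ≤ ‖gw‖ * (ρ * muH * ‖gw‖) :=
      mul_le_mul_of_nonneg_left hb (norm_nonneg gw)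
    nlinarith [norm_nonneg gw]
  · have h4 := norm_add_le (A gw) (w - A gw)
    rw [add_sub_cancel] at h4
    linarith

lemma drift_pointwise {L η muH MH ρ c gn iw wn : ℝ} (hη0 : 0 ≤ η) (hL : 0 ≤ L)
    (hc : c = η * muH * (1 - ρ) - (L * η ^ 2 / 2) * (MH + ρ * muH) ^ 2)
    (h1 : (1 - ρ) * muH * gn ^ 2 ≤ iw) (h3 : wn ^ 2 ≤ ((MH + ρ * muH) * gn) ^ 2) :
    -(η * iw) + L * η ^ 2 / 2 * wn ^ 2 ≤ -(c * gn ^ 2) := by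
  have h4 : 0 ≤ L * η ^ 2 / 2 := by positivity
  rw [hc]
  nlinarith [mul_le_mul_of_nonneg_left h1 hη0, mul_le_mul_of_nonneg_left h3 h4]

lemma f_growth_bound {E : Type*} [NormedAddCommGroup E] [InnerProductSpace ℝ E]
    [CompleteSpace E] {f : E → ℝ} {L : ℝ} (hL : 0 ≤ L) (hdiff : Differentiable ℝ f)
    (hlip : ∀ x y, ‖gradient f x - gradient f y‖ ≤ L * ‖x - y‖) (z : E) :
    |f z - f 0| ≤ ‖gradient f 0‖ * ‖z‖ + (3 * L / 2) * ‖z‖ ^ 2 := by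
  have h1 := smooth_descent hL hdiff hlip 0 z
  have h2 := smooth_descent hL hdiff hlip z 0
  simp only [sub_zero, zero_sub, norm_neg] at h1 h2
  have h3 := abs_le.mp (abs_real_inner_le_norm (gradient f 0) z)
  have h4 : ⟪gradient f z, -z⟫ ≤ ‖gradient f z‖ * ‖z‖ := by
    simpa using real_inner_le_norm (gradient f z) (-z)
  have h5 : ‖gradient f z - gradient f 0‖ ≤ L * ‖z‖ := by simpa using hlip z 0
  have h6 := norm_sub_norm_le (gradient f z) (gradient f 0)
  have h7 : ‖gradient f z‖ ≤ ‖gradient f 0‖ + L * ‖z‖ := by linarith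
  have h8 : ‖gradient f z‖ * ‖z‖ ≤ (‖gradient f 0‖ + L * ‖z‖) * ‖z‖ :=
    mul_le_mul_of_nonneg_right h7 (norm_nonneg z)
  rw [abs_sub_le_iff]
  constructor <;> nlinarith [norm_nonneg z]

end Helpers

/-- **Linear convergence to a neighborhood under the Polyak–Łojasiewicz condition.**
In the setting of the nonconvex stationarity bound, if moreover `f` satisfies the PL
condition `(1/2)‖∇f(θ)‖² ≥ μ_PL (f(θ) − fstar)` and, with
`c = η μ_H (1−ρ) − (Lη²/2)(M_H+ρμ_H)²`, we have `0 < 2μ_PL c < 1`, then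
`E[f(θ_T) − fstar] ≤ (1 − 2μ_PL c)^T (f(θ_0) − fstar) + Lη²σ²/(4μ_PL c)`. -/
theorem pl_linear_convergence_to_neighborhood
    {Ω : Type*} {m0 : MeasurableSpace Ω} (μ : Measure Ω) [IsProbabilityMeasure μ]
    (F : Filtration ℕ m0)
    {d : ℕ} (f : EuclideanSpace ℝ (Fin d) → ℝ)
    (L : ℝ) (hL : 0 < L)
    (hdiff : Differentiable ℝ f)
    (hlip : ∀ x y, ‖gradient f x - gradient f y‖ ≤ L * ‖x - y‖)
    (fstar : ℝ) (hbdd : ∀ x, fstar ≤ f x)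
    (muH MH ρ σ η : ℝ)
    (hmuH : 0 < muH) (hMH : muH ≤ MH)
    (hρ0 : 0 ≤ ρ) (hρ1 : ρ < 1) (hσ : 0 ≤ σ)
    (hη0 : 0 < η) (hη : η ≤ muH * (1 - ρ) / (L * (MH + ρ * muH) ^ 2))
    (θ0 : EuclideanSpace ℝ (Fin d))
    (θ u : ℕ → Ω → EuclideanSpace ℝ (Fin d))
    (hθ0 : θ 0 = fun _ => θ0)
    (hθmeas : ∀ t, StronglyMeasurable[F t] (θ t))
    (humeas : ∀ t, StronglyMeasurable[F (t + 1)] (u t))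
    (huL2 : ∀ t, MemLp (u t) 2 μ)
    (hrec : ∀ t ω, θ (t + 1) ω = θ t ω - η • u t ω)
    (hbias : ∀ t, ∃ H : Ω → Matrix (Fin d) (Fin d) ℝ,
      (∀ i j, Measurable[F t] fun ω => H ω i j) ∧
      ∀ᵐ ω ∂μ,
        (H ω).IsSymm ∧
        (∀ x : EuclideanSpace ℝ (Fin d),
          muH * ‖x‖ ^ 2 ≤ ⟪x, Matrix.toEuclideanLin (H ω) x⟫ ∧
          ⟪x, Matrix.toEuclideanLin (H ω) x⟫ ≤ MH * ‖x‖ ^ 2) ∧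
        ‖(μ[u t | F t]) ω - Matrix.toEuclideanLin (H ω) (gradient f (θ t ω))‖
          ≤ ρ * muH * ‖gradient f (θ t ω)‖)
    (hvar : ∀ t, ∀ᵐ ω ∂μ,
      (μ[(fun ω' => ‖u t ω' - (μ[u t | F t]) ω'‖ ^ 2) | F t]) ω ≤ σ ^ 2)
    (muPL : ℝ) (hmuPL : 0 < muPL)
    (hPL : ∀ x, muPL * (f x - fstar) ≤ (1 / 2) * ‖gradient f x‖ ^ 2)
    (c : ℝ)
    (hc : c = η * muH * (1 - ρ) - (L * η ^ 2 / 2) * (MH + ρ * muH) ^ 2)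
    (hc0 : 0 < 2 * muPL * c) (hc1 : 2 * muPL * c < 1) :
    ∀ T : ℕ,
      ∫ ω, (f (θ T ω) - fstar) ∂μ
        ≤ (1 - 2 * muPL * c) ^ T * (f θ0 - fstar)
          + L * η ^ 2 * σ ^ 2 / (4 * muPL * c) := by
  have hL' : 0 ≤ L := hL.le
  have hc' : 0 < c := by
    by_contra h
    push_neg at h
    have h2 : 2 * muPL * c ≤ 0 :=
      mul_nonpos_of_nonneg_of_nonpos (by positivity) h
    linarith
  have hgc : Continuous (gradient f) := by
    have : LipschitzWith L.toNNReal (gradient f) :=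
      LipschitzWith.of_dist_le_mul (fun a b => by
        simpa [dist_eq_norm, Real.coe_toNNReal L hL'] using hlip a b)
    exact this.continuous
  -- θ is in L²
  have hθL2 : ∀ t, MemLp (θ t) 2 μ := by
    intro t
    induction t with
    | zero => rw [hθ0]; exact memLp_const _
    | succ t ih =>
        have he : θ (t + 1) = fun ω => θ t ω - η • u t ω := funext (hrec t)
        rw [he]
        exact ih.sub ((huL2 t).const_smul η)
  -- the gradient along θ is in L²
  have hgradbd : ∀ z : EuclideanSpace ℝ (Fin d),
      ‖gradient f z‖ ≤ ‖gradient f 0‖ + L * ‖z‖ := by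
    intro z
    have h1 : ‖gradient f z - gradient f 0‖ ≤ L * ‖z‖ := by simpa using hlip z 0
    have h2 := norm_sub_norm_le (gradient f z) (gradient f 0)
    linarith
  have hgL2 : ∀ t, MemLp (fun ω => gradient f (θ t ω)) 2 μ := by
    intro t
    have hdom : MemLp (fun ω => ‖gradient f 0‖ + L * ‖θ t ω‖) 2 μ := by
      have h1 := (memLp_const (μ := μ) (p := 2) ‖gradient f 0‖).add (((hθL2 t).norm).const_mul L)
      exact h1
    refine MemLp.of_le hdom
      ((hgc.comp_stronglyMeasurable ((hθmeas t).mono (F.le t))).aestronglyMeasurable) ?_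
    filter_upwards with ω
    rw [Real.norm_eq_abs]
    exact (hgradbd (θ t ω)).trans (le_abs_self _)
  have hgsm : ∀ t, StronglyMeasurable[F t] (fun ω => gradient f (θ t ω)) := fun t =>
    hgc.comp_stronglyMeasurable (hθmeas t)
  -- f along θ is integrable
  have hfbd : ∀ z : EuclideanSpace ℝ (Fin d),
      |f z - f 0| ≤ ‖gradient f 0‖ * ‖z‖ + (3 * L / 2) * ‖z‖ ^ 2 :=
    f_growth_bound hL' hdiff hlip
  have hfint : ∀ t, Integrable (fun ω => f (θ t ω)) μ := by
    intro t
    have hd1 : Integrable (fun ω => ‖gradient f 0‖ * ‖θ t ω‖) μ :=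
      (((hθL2 t).norm.integrable one_le_two)).const_mul _
    have hd2 : Integrable (fun ω => (3 * L / 2) * ‖θ t ω‖ ^ 2) μ :=
      (memLp_sq_integrable (hθL2 t)).const_mul _
    have hdom : Integrable
        (fun ω => |f 0| + (‖gradient f 0‖ * ‖θ t ω‖ + (3 * L / 2) * ‖θ t ω‖ ^ 2)) μ :=
      (integrable_const _).add (hd1.add hd2)
    refine hdom.mono'
      ((hdiff.continuous.comp_stronglyMeasurable
        ((hθmeas t).mono (F.le t))).aestronglyMeasurable) ?_
    filter_upwards with ω
    have h1 := hfbd (θ t ω)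
    rw [Real.norm_eq_abs]
    have h2 : |f (θ t ω)| ≤ |f 0| + |f (θ t ω) - f 0| := by
      calc |f (θ t ω)| = |f 0 + (f (θ t ω) - f 0)| := by ring_nf
        _ ≤ |f 0| + |f (θ t ω) - f 0| := abs_add_le _ _
    linarith
  have hfint' : ∀ t, Integrable (fun ω => f (θ t ω) - fstar) μ := fun t =>
    (hfint t).sub (integrable_const _)
  -- the one-step inequality
  have key : ∀ t, ∫ ω, (f (θ (t + 1) ω) - fstar) ∂μ
      ≤ (1 - 2 * muPL * c) * ∫ ω, (f (θ t ω) - fstar) ∂μ + L * η ^ 2 * σ ^ 2 / 2 := by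
    intro t
    haveI : SigmaFinite (μ.trim (F.le t)) := sigmaFiniteTrim_mono _ le_rfl
    obtain ⟨H, hHmeas, hHae⟩ := hbias t
    have hMH0 : 0 ≤ MH := le_trans hmuH.le hMH
    -- a.e. consequences of the bias assumption
    have hae2 : ∀ᵐ ω ∂μ,
        (1 - ρ) * muH * ‖gradient f (θ t ω)‖ ^ 2
          ≤ ⟪gradient f (θ t ω), (μ[u t|F t]) ω⟫ ∧
        ‖(μ[u t|F t]) ω‖ ≤ (MH + ρ * muH) * ‖gradient f (θ t ω)‖ := by
      filter_upwards [hHae] with ω hω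
      obtain ⟨hsymm, hbounds, hb⟩ := hω
      have hsymA : ∀ p q : EuclideanSpace ℝ (Fin d),
          ⟪Matrix.toEuclideanLin (H ω) p, q⟫ = ⟪p, Matrix.toEuclideanLin (H ω) q⟫ := by
        have herm : (H ω).IsHermitian := hsymm
        exact fun p q => (Matrix.isHermitian_iff_isSymmetric.mp herm) p q
      exact bias_consequences hmuH hMH0 hρ0 (Matrix.toEuclideanLin (H ω)) hsymA
        hbounds (gradient f (θ t ω)) ((μ[u t|F t]) ω) hb
    -- L² facts
    have hubm : StronglyMeasurable[F t] (μ[u t|F t]) := stronglyMeasurable_condExp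
    have hubL2 : MemLp (μ[u t|F t]) 2 μ := by
      have hdom : MemLp (fun ω => (MH + ρ * muH) * ‖gradient f (θ t ω)‖) 2 μ :=
        (hgL2 t).norm.const_mul _
      refine MemLp.of_le hdom ((hubm.mono (F.le t)).aestronglyMeasurable) ?_
      filter_upwards [hae2] with ω hω
      rw [Real.norm_eq_abs]
      exact hω.2.trans (le_abs_self _)
    -- integrability of all the pieces
    have int_inner_gu : Integrable (fun ω => ⟪gradient f (θ t ω), u t ω⟫) μ :=
      memLp_inner_integrable (hgL2 t) (huL2 t)
    have int_inner_gub : Integrable (fun ω => ⟪gradient f (θ t ω), (μ[u t|F t]) ω⟫) μ :=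
      memLp_inner_integrable (hgL2 t) hubL2
    have int_inner_ubu : Integrable (fun ω => ⟪(μ[u t|F t]) ω, u t ω⟫) μ :=
      memLp_inner_integrable hubL2 (huL2 t)
    have int_u2 : Integrable (fun ω => ‖u t ω‖ ^ 2) μ := memLp_sq_integrable (huL2 t)
    have int_ub2 : Integrable (fun ω => ‖(μ[u t|F t]) ω‖ ^ 2) μ := memLp_sq_integrable hubL2
    have int_uub2 : Integrable (fun ω => ‖u t ω - (μ[u t|F t]) ω‖ ^ 2) μ :=
      memLp_sq_integrable ((huL2 t).sub hubL2)
    have int_g2 : Integrable (fun ω => ‖gradient f (θ t ω)‖ ^ 2) μ :=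
      memLp_sq_integrable (hgL2 t)
    -- conditional expectation identities
    have hI1 : ∫ ω, ⟪gradient f (θ t ω), u t ω⟫ ∂μ
        = ∫ ω, ⟪gradient f (θ t ω), (μ[u t|F t]) ω⟫ ∂μ :=
      integral_inner_condexp (F.le t) (hgsm t) (hgL2 t) (huL2 t) hubL2
    have hI2 : ∫ ω, ⟪(μ[u t|F t]) ω, u t ω⟫ ∂μ = ∫ ω, ‖(μ[u t|F t]) ω‖ ^ 2 ∂μ := by
      rw [integral_inner_condexp (F.le t) hubm hubL2 (huL2 t) hubL2]
      refine integral_congr_ae ?_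
      filter_upwards with ω
      rw [real_inner_self_eq_norm_sq]
    -- variance bound
    have hV : ∫ ω, ‖u t ω - (μ[u t|F t]) ω‖ ^ 2 ∂μ ≤ σ ^ 2 := by
      have e : ∫ ω, ‖u t ω - (μ[u t|F t]) ω‖ ^ 2 ∂μ
          = ∫ ω, (μ[(fun ω' => ‖u t ω' - (μ[u t|F t]) ω'‖ ^ 2)|F t]) ω ∂μ :=
        (integral_condExp (F.le t)).symm
      rw [e]
      calc ∫ ω, (μ[(fun ω' => ‖u t ω' - (μ[u t|F t]) ω'‖ ^ 2)|F t]) ω ∂μ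
          ≤ ∫ _ω, σ ^ 2 ∂μ :=
            integral_mono_ae integrable_condExp (integrable_const _) (hvar t)
        _ = σ ^ 2 := by simp
    -- orthogonal decomposition of the second moment
    have hI2' : ∫ ω, ‖u t ω‖ ^ 2 ∂μ
        = ∫ ω, ‖(μ[u t|F t]) ω‖ ^ 2 ∂μ + ∫ ω, ‖u t ω - (μ[u t|F t]) ω‖ ^ 2 ∂μ := by
      have hc2 : Integrable (fun ω => 2 * ⟪(μ[u t|F t]) ω, u t ω⟫) μ :=
        int_inner_ubu.const_mul 2
      have ha : Integrable
          (fun ω => 2 * ⟪(μ[u t|F t]) ω, u t ω⟫ - ‖(μ[u t|F t]) ω‖ ^ 2) μ :=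
        hc2.sub int_ub2
      calc ∫ ω, ‖u t ω‖ ^ 2 ∂μ
          = ∫ ω, ((2 * ⟪(μ[u t|F t]) ω, u t ω⟫ - ‖(μ[u t|F t]) ω‖ ^ 2)
              + ‖u t ω - (μ[u t|F t]) ω‖ ^ 2) ∂μ := by
            refine integral_congr_ae (Filter.Eventually.of_forall fun ω => ?_)
            have h1 := norm_sub_sq_real (u t ω) ((μ[u t|F t]) ω)
            have h2 := real_inner_comm (u t ω) ((μ[u t|F t]) ω)
            simp only
            linarith
        _ = ∫ ω, (2 * ⟪(μ[u t|F t]) ω, u t ω⟫ - ‖(μ[u t|F t]) ω‖ ^ 2) ∂μ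
              + ∫ ω, ‖u t ω - (μ[u t|F t]) ω‖ ^ 2 ∂μ := integral_add ha int_uub2
        _ = (∫ ω, 2 * ⟪(μ[u t|F t]) ω, u t ω⟫ ∂μ - ∫ ω, ‖(μ[u t|F t]) ω‖ ^ 2 ∂μ)
              + ∫ ω, ‖u t ω - (μ[u t|F t]) ω‖ ^ 2 ∂μ := by
            rw [integral_sub hc2 int_ub2]
        _ = ∫ ω, ‖(μ[u t|F t]) ω‖ ^ 2 ∂μ + ∫ ω, ‖u t ω - (μ[u t|F t]) ω‖ ^ 2 ∂μ := by
            rw [integral_const_mul, hI2]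
            ring
    -- pointwise descent inequality
    have hdesc : ∀ ω, f (θ (t + 1) ω) - fstar
        ≤ (f (θ t ω) - fstar) - η * ⟪gradient f (θ t ω), u t ω⟫
          + L * η ^ 2 / 2 * ‖u t ω‖ ^ 2 := by
      intro ω
      have h := smooth_descent hL' hdiff hlip (θ t ω) (θ (t + 1) ω)
      have hsub : θ (t + 1) ω - θ t ω = -(η • u t ω) := by
        rw [hrec t ω]; abel
      rw [hsub] at h
      have e1 : ⟪gradient f (θ t ω), -(η • u t ω)⟫
          = -(η * ⟪gradient f (θ t ω), u t ω⟫) := by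
        rw [inner_neg_right, real_inner_smul_right]
      have e2 : ‖-(η • u t ω)‖ ^ 2 = η ^ 2 * ‖u t ω‖ ^ 2 := by
        rw [norm_neg, norm_smul, Real.norm_eq_abs, mul_pow, sq_abs]
      rw [e1, e2] at h
      have e3 : L / 2 * (η ^ 2 * ‖u t ω‖ ^ 2) = L * η ^ 2 / 2 * ‖u t ω‖ ^ 2 := by ring
      linarith
    -- integrate the descent inequality
    have step1 : ∫ ω, (f (θ (t + 1) ω) - fstar) ∂μ
        ≤ ∫ ω, ((f (θ t ω) - fstar) - η * ⟪gradient f (θ t ω), u t ω⟫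
            + L * η ^ 2 / 2 * ‖u t ω‖ ^ 2) ∂μ :=
      integral_mono (hfint' (t + 1))
        (((hfint' t).sub (int_inner_gu.const_mul η)).add (int_u2.const_mul _)) hdesc
    have step2 : ∫ ω, ((f (θ t ω) - fstar) - η * ⟪gradient f (θ t ω), u t ω⟫
          + L * η ^ 2 / 2 * ‖u t ω‖ ^ 2) ∂μ
        = ∫ ω, (f (θ t ω) - fstar) ∂μ
          - η * ∫ ω, ⟪gradient f (θ t ω), u t ω⟫ ∂μ
          + L * η ^ 2 / 2 * ∫ ω, ‖u t ω‖ ^ 2 ∂μ := by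
      have ic : Integrable (fun ω => η * ⟪gradient f (θ t ω), u t ω⟫) μ :=
        int_inner_gu.const_mul η
      have ia : Integrable
          (fun ω => (f (θ t ω) - fstar) - η * ⟪gradient f (θ t ω), u t ω⟫) μ :=
        (hfint' t).sub ic
      have ib : Integrable (fun ω => L * η ^ 2 / 2 * ‖u t ω‖ ^ 2) μ :=
        int_u2.const_mul _
      rw [integral_add ia ib, integral_sub (hfint' t) ic, integral_const_mul,
        integral_const_mul]
    -- the drift bound
    have hdrift : - (η * ∫ ω, ⟪gradient f (θ t ω), (μ[u t|F t]) ω⟫ ∂μ)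
          + L * η ^ 2 / 2 * ∫ ω, ‖(μ[u t|F t]) ω‖ ^ 2 ∂μ
        ≤ -(c * ∫ ω, ‖gradient f (θ t ω)‖ ^ 2 ∂μ) := by
      have hmono2 : ∫ ω, (-(η * ⟪gradient f (θ t ω), (μ[u t|F t]) ω⟫)
            + L * η ^ 2 / 2 * ‖(μ[u t|F t]) ω‖ ^ 2) ∂μ
          ≤ ∫ ω, -(c * ‖gradient f (θ t ω)‖ ^ 2) ∂μ := by
        refine integral_mono_ae
          (((int_inner_gub.const_mul η).neg).add (int_ub2.const_mul _))
          ((int_g2.const_mul c).neg) ?_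
        filter_upwards [hae2] with ω hω
        obtain ⟨h1, h2⟩ := hω
        have h3 : ‖(μ[u t|F t]) ω‖ ^ 2
            ≤ ((MH + ρ * muH) * ‖gradient f (θ t ω)‖) ^ 2 :=
          pow_le_pow_left₀ (norm_nonneg _) h2 2
        exact drift_pointwise hη0.le hL' hc h1 h3
      have id0 : Integrable (fun ω => η * ⟪gradient f (θ t ω), (μ[u t|F t]) ω⟫) μ :=
        int_inner_gub.const_mul η
      have id1 : Integrable
          (fun ω => -(η * ⟪gradient f (θ t ω), (μ[u t|F t]) ω⟫)) μ := id0.neg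
      have id2 : Integrable (fun ω => L * η ^ 2 / 2 * ‖(μ[u t|F t]) ω‖ ^ 2) μ :=
        int_ub2.const_mul _
      rw [integral_add id1 id2, integral_neg, integral_const_mul, integral_const_mul,
        integral_neg, integral_const_mul] at hmono2
      exact hmono2
    -- the PL bound
    have hPLint : 2 * muPL * ∫ ω, (f (θ t ω) - fstar) ∂μ
        ≤ ∫ ω, ‖gradient f (θ t ω)‖ ^ 2 ∂μ := by
      rw [← integral_const_mul]
      refine integral_mono ((hfint' t).const_mul _) int_g2 ?_
      intro ω
      have h1 := hPL (θ t ω)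
      simp only
      linarith
    -- put everything together
    have h4 : 0 ≤ L * η ^ 2 / 2 := by positivity
    have hfinal := step1.trans_eq step2
    rw [hI1, hI2'] at hfinal
    have p1 := mul_le_mul_of_nonneg_left hPLint hc'.le
    have p2 := mul_le_mul_of_nonneg_left hV h4
    linarith [hfinal, hdrift, p1, p2]
  -- the base value
  have base : ∫ ω, (f (θ 0 ω) - fstar) ∂μ = f θ0 - fstar := by
    rw [hθ0]; simp
  have hB : 0 ≤ L * η ^ 2 * σ ^ 2 / (4 * muPL * c) := by
    apply div_nonneg (by positivity)
    linarith
  -- induction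
  intro T
  induction T with
  | zero =>
    rw [base]
    simp only [pow_zero, one_mul]
    linarith
  | succ T ih =>
    have hq0 : 0 ≤ 1 - 2 * muPL * c := by linarith
    have h2 : (1 - 2 * muPL * c) * (L * η ^ 2 * σ ^ 2 / (4 * muPL * c))
        + L * η ^ 2 * σ ^ 2 / 2 = L * η ^ 2 * σ ^ 2 / (4 * muPL * c) := by
      have hne : 4 * muPL * c ≠ 0 := ne_of_gt (by linarith)
      field_simp
      ring
    calc ∫ ω, (f (θ (T + 1) ω) - fstar) ∂μ
        ≤ (1 - 2 * muPL * c) * ∫ ω, (f (θ T ω) - fstar) ∂μ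
          + L * η ^ 2 * σ ^ 2 / 2 := key T
      _ ≤ (1 - 2 * muPL * c) * ((1 - 2 * muPL * c) ^ T * (f θ0 - fstar)
            + L * η ^ 2 * σ ^ 2 / (4 * muPL * c)) + L * η ^ 2 * σ ^ 2 / 2 :=
          add_le_add_left (mul_le_mul_of_nonneg_left ih hq0) _
      _ = (1 - 2 * muPL * c) ^ (T + 1) * (f θ0 - fstar)
          + L * η ^ 2 * σ ^ 2 / (4 * muPL * c) := by
          rw [pow_succ]
          linear_combination h2
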